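/- Five points in the projective plane, no three of which are collinear, determine a unique conic passing through all of them. -/

import Mathlib

open QuadraticMap Matrix

namespace FPC
variable {k : Type*} [Field k]

lemma vec6_five {α : Type*} (a b c d e f : α) : ![a,b,c,d,e,f] (5 : Fin 6) = f := rfl

/-- Evaluation of quadratic forms at a point, as a linear map. -/
def evalQF (x : Fin 3 → k) : QuadraticForm k (Fin 3 → k) →ₗ[k] k where
  toFun Q := Q x
  map_add' _ _ := rfl
  map_smul' _ _ := rfl

@[simp] lemma evalQF_apply (x : Fin 3 → k) (Q : QuadraticForm k (Fin 3 → k)) :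
    evalQF x Q = Q x := rfl

/-- The coefficients of a ternary quadratic form, as a linear map. -/
def coeffsL : QuadraticForm k (Fin 3 → k) →ₗ[k] (Fin 6 → k) where
  toFun := fun Q => ![Q (Pi.single 0 1), Q (Pi.single 1 1), Q (Pi.single 2 1),
    polar Q (Pi.single 0 1) (Pi.single 1 1), polar Q (Pi.single 0 1) (Pi.single 2 1),
    polar Q (Pi.single 1 1) (Pi.single 2 1)]
  map_add' Q Q' := by
    funext m
    fin_cases m <;>
      simp [QuadraticMap.polar, QuadraticMap.add_apply, vec6_five] <;> ring
  map_smul' c Q := by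
    funext m
    fin_cases m <;>
      simp [QuadraticMap.polar, QuadraticMap.smul_apply, smul_eq_mul, vec6_five] <;> ring

/-- The six monomial ternary quadratic forms. -/
def mons : Fin 6 → QuadraticForm k (Fin 3 → k) :=
  ![QuadraticMap.proj 0 0, QuadraticMap.proj 1 1, QuadraticMap.proj 2 2,
    QuadraticMap.proj 0 1, QuadraticMap.proj 0 2, QuadraticMap.proj 1 2]

lemma coeffsL_mons (m : Fin 6) :
    coeffsL (mons m : QuadraticForm k (Fin 3 → k)) = Pi.single m 1 := by
  funext j
  fin_cases m <;> fin_cases j <;>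
    simp [coeffsL, mons, QuadraticMap.polar, QuadraticMap.proj_apply,
      Pi.single_apply, vec6_five]

lemma expansion (Q : QuadraticForm k (Fin 3 → k)) (x : Fin 3 → k) :
    Q x = ∑ m : Fin 6, coeffsL Q m * mons m x := by
  have hx : x = x 0 • (Pi.single 0 1 : Fin 3 → k) + x 1 • (Pi.single 1 1 : Fin 3 → k)
      + x 2 • (Pi.single 2 1 : Fin 3 → k) := by
    funext i; fin_cases i <;> simp
  rw [Fin.sum_univ_six]
  simp only [coeffsL, mons, LinearMap.coe_mk, AddHom.coe_mk, Matrix.cons_val_zero,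
    Matrix.cons_val_one, Matrix.head_cons, Matrix.cons_val_two, Matrix.tail_cons,
    Matrix.cons_val_three, Matrix.cons_val_four, vec6_five, QuadraticMap.proj_apply]
  conv_lhs => rw [hx]
  rw [QuadraticMap.map_add Q, QuadraticMap.map_add Q, polar_add_left]
  simp only [QuadraticMap.map_smul, polar_smul_left, polar_smul_right, smul_eq_mul]
  ring

lemma mons_li : LinearIndependent k (mons (k := k)) := by
  refine LinearIndependent.of_comp coeffsL ?_
  have h := (Pi.basisFun k (Fin 6)).linearIndependent
  have e : (fun m => (coeffsL (mons m : QuadraticForm k (Fin 3 → k)))) = ⇑(Pi.basisFun k (Fin 6)) := by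
    funext m; rw [coeffsL_mons]; simp [Pi.basisFun_apply]
  simpa [Function.comp_def, e] using h

lemma mons_span : ⊤ ≤ Submodule.span k (Set.range (mons (k := k))) := by
  intro Q _
  have hQ : Q = ∑ m, coeffsL Q m • mons m := by
    ext x
    have := map_sum (evalQF x) (fun m => coeffsL Q m • mons m) Finset.univ
    simp only [evalQF_apply] at this
    rw [this, expansion Q x]
    simp [smul_eq_mul]
  rw [hQ]
  exact Submodule.sum_mem _ fun m _ =>
    Submodule.smul_mem _ _ (Submodule.subset_span ⟨m, rfl⟩)

noncomputable def monsBasis : Module.Basis (Fin 6) k (QuadraticForm k (Fin 3 → k)) :=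
  Module.Basis.mk mons_li mons_span

instance : FiniteDimensional k (QuadraticForm k (Fin 3 → k)) :=
  Module.Basis.finiteDimensional_of_finite monsBasis

lemma finrank_qf : Module.finrank k (QuadraticForm k (Fin 3 → k)) = 6 := by
  simpa using Module.finrank_eq_card_basis (monsBasis (k := k))


/-- Dot product with a fixed vector, as a linear functional. -/
def lin (u : Fin 3 → k) : (Fin 3 → k) →ₗ[k] k where
  toFun x := u ⬝ᵥ x
  map_add' x y := by simp [dotProduct_add]
  map_smul' c x := by simp [dotProduct_smul]

@[simp] lemma lin_apply (u x : Fin 3 → k) : lin u x = u ⬝ᵥ x := rfl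

lemma det_ne_zero {u v w : Fin 3 → k} (h : LinearIndependent k ![u, v, w]) :
    Matrix.det ![u, v, w] ≠ 0 := by
  have h2 : IsUnit (Matrix.of ![u, v, w]) :=
    Matrix.linearIndependent_rows_iff_isUnit.mp h
  exact ((Matrix.isUnit_iff_isUnit_det _).mp h2).ne_zero

/-- Indices of the four other points. -/
def OT : Fin 5 → Fin 4 → Fin 5 :=
  ![![1,2,3,4], ![0,2,3,4], ![0,1,3,4], ![0,1,2,4], ![0,1,2,3]]

variable (p : Fin 5 → (Fin 3 → k))

/-- The degenerate conic consisting of two lines through the four points other than `p i`. -/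
noncomputable def stdConic (i : Fin 5) : QuadraticForm k (Fin 3 → k) :=
  QuadraticMap.linMulLin (lin (crossProduct (p (OT i 0)) (p (OT i 1))))
    (lin (crossProduct (p (OT i 2)) (p (OT i 3))))

lemma stdConic_apply (i : Fin 5) (x : Fin 3 → k) :
    stdConic p i x = (x ⬝ᵥ (p (OT i 0)) ⨯₃ (p (OT i 1))) * (x ⬝ᵥ (p (OT i 2)) ⨯₃ (p (OT i 3))) := by
  simp [stdConic, QuadraticMap.linMulLin_apply, dotProduct_comm]

lemma stdConic_self_ne (hgen : ∀ i j l : Fin 5, i ≠ j → i ≠ l → j ≠ l →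
      LinearIndependent k ![p i, p j, p l]) (i : Fin 5) : stdConic p i (p i) ≠ 0 := by
  rw [stdConic_apply]
  refine mul_ne_zero ?_ ?_
  · rw [triple_product_eq_det]
    exact det_ne_zero (hgen i (OT i 0) (OT i 1) (by fin_cases i <;> decide)
      (by fin_cases i <;> decide) (by fin_cases i <;> decide))
  · rw [triple_product_eq_det]
    exact det_ne_zero (hgen i (OT i 2) (OT i 3) (by fin_cases i <;> decide)
      (by fin_cases i <;> decide) (by fin_cases i <;> decide))

lemma stdConic_zero {i j : Fin 5} (h : j ≠ i) : stdConic p i (p j) = 0 := by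
  rw [stdConic_apply]
  have hc : j = OT i 0 ∨ j = OT i 1 ∨ j = OT i 2 ∨ j = OT i 3 := by
    fin_cases i <;> fin_cases j <;> simp_all <;> decide
  rcases hc with h' | h' | h' | h' <;> subst h'
  · rw [dot_self_cross, zero_mul]
  · rw [dot_cross_self, zero_mul]
  · rw [dot_self_cross, mul_zero]
  · rw [dot_cross_self, mul_zero]


end FPC


/-- **Five points determine a conic.** Over an algebraically closed field, given five points
of the projective plane (represented by nonzero vectors in `k³`), no three of which are
collinear (i.e. any three of the representing vectors are linearly independent), there is a
nonzero quadratic form vanishing at all five points, and it is unique up to a nonzero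
scalar. -/
theorem five_points_determine_a_conic
    (k : Type*) [Field k] [IsAlgClosed k]
    (p : Fin 5 → (Fin 3 → k)) (hp : ∀ i, p i ≠ 0)
    (hgen : ∀ i j l : Fin 5, i ≠ j → i ≠ l → j ≠ l →
      LinearIndependent k ![p i, p j, p l]) :
    (∃ Q : QuadraticForm k (Fin 3 → k), Q ≠ 0 ∧ ∀ i, Q (p i) = 0) ∧
    (∀ Q Q' : QuadraticForm k (Fin 3 → k),
      Q ≠ 0 → (∀ i, Q (p i) = 0) → Q' ≠ 0 → (∀ i, Q' (p i) = 0) →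
      ∃ c : k, c ≠ 0 ∧ Q' = c • Q) := by
  classical
  constructor
  · -- existence, by rank-nullity
    set F : QuadraticForm k (Fin 3 → k) →ₗ[k] (Fin 5 → k) :=
      LinearMap.pi (fun i => FPC.evalQF (p i)) with hF
    have hker : LinearMap.ker F ≠ ⊥ := by
      intro hbot
      have h1 := LinearMap.finrank_range_add_finrank_ker F
      rw [hbot, finrank_bot, add_zero, FPC.finrank_qf] at h1
      have h2 : Module.finrank k (LinearMap.range F) ≤ 5 := by
        have := Submodule.finrank_le (LinearMap.range F)
        simpa using this
      omega
    obtain ⟨Q, hQmem, hQne⟩ := Submodule.exists_mem_ne_zero_of_ne_bot hker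
    refine ⟨Q, hQne, fun i => ?_⟩
    have h0 : F Q = 0 := LinearMap.mem_ker.mp hQmem
    have := congrFun h0 i
    simpa [hF, LinearMap.pi_apply] using this
  · -- uniqueness
    intro Q Q' hQ hQv hQ' hQ'v
    set fam : Fin 6 → QuadraticForm k (Fin 3 → k) := Fin.snoc (FPC.stdConic p) Q with hfam
    have famcs : ∀ i : Fin 5, fam (Fin.castSucc i) = FPC.stdConic p i := by
      intro i; simp [hfam]
    have famlast : fam (Fin.last 5) = Q := by rw [hfam, Fin.snoc_last]
    have evsum : ∀ (g : Fin 6 → k) (j : Fin 5),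
        FPC.evalQF (p j) (∑ m, g m • fam m)
          = g (Fin.castSucc j) * FPC.stdConic p j (p j) := by
      intro g j
      rw [map_sum]
      simp only [_root_.map_smul, QuadraticMap.smul_apply, smul_eq_mul, FPC.evalQF_apply]
      rw [Fin.sum_univ_castSucc]
      have hlastterm : g (Fin.last 5) * fam (Fin.last 5) (p j) = 0 := by
        rw [famlast, hQv j, mul_zero]
      rw [hlastterm, add_zero]
      rw [Finset.sum_eq_single j]
      · rw [famcs]
      · intro i _ hij
        rw [famcs, FPC.stdConic_zero p (Ne.symm hij), mul_zero]
      · intro h; exact absurd (Finset.mem_univ j) h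
    have hli : LinearIndependent k fam := by
      rw [Fintype.linearIndependent_iff]
      intro g hsum
      have h5 : ∀ j : Fin 5, g (Fin.castSucc j) = 0 := by
        intro j
        have h := evsum g j
        rw [hsum, map_zero] at h
        exact (mul_eq_zero.mp h.symm).resolve_right (FPC.stdConic_self_ne p hgen j)
      have hlast : g (Fin.last 5) = 0 := by
        have hsum2 : g (Fin.last 5) • Q = 0 := by
          rw [← famlast, ← hsum, Fin.sum_univ_castSucc]
          have : ∀ i : Fin 5, g (Fin.castSucc i) • fam (Fin.castSucc i) = 0 := by
            intro i; rw [h5 i, zero_smul]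
          rw [Finset.sum_congr rfl (fun i _ => this i), Finset.sum_const_zero, zero_add]
        exact (smul_eq_zero.mp hsum2).resolve_right hQ
      intro m
      refine Fin.lastCases ?_ ?_ m
      · exact hlast
      · exact h5
    have hcard : Fintype.card (Fin 6) = Module.finrank k (QuadraticForm k (Fin 3 → k)) := by
      rw [FPC.finrank_qf]; simp
    set b := basisOfLinearIndependentOfCardEqFinrank hli hcard with hb
    have hbcoe : ⇑b = fam := coe_basisOfLinearIndependentOfCardEqFinrank hli hcard
    set r : Fin 6 → k := fun m => b.repr Q' m with hr
    have hsumQ' : ∑ m, r m • fam m = Q' := by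
      rw [← hbcoe]
      exact b.sum_repr Q'
    have h5' : ∀ j : Fin 5, r (Fin.castSucc j) = 0 := by
      intro j
      have h := evsum r j
      rw [hsumQ'] at h
      rw [FPC.evalQF_apply, hQ'v j] at h
      exact (mul_eq_zero.mp h.symm).resolve_right (FPC.stdConic_self_ne p hgen j)
    have hQ'eq : Q' = r (Fin.last 5) • Q := by
      rw [← hsumQ', Fin.sum_univ_castSucc, famlast]
      have : ∀ i : Fin 5, r (Fin.castSucc i) • fam (Fin.castSucc i) = 0 := by
        intro i; rw [h5' i, zero_smul]
      rw [Finset.sum_congr rfl (fun i _ => this i), Finset.sum_const_zero, zero_add]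
    refine ⟨r (Fin.last 5), ?_, hQ'eq⟩
    intro hc
    rw [hc, zero_smul] at hQ'eq
    exact hQ' hQ'eq
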